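/- Let h(y) = ∏_{i=1}^n (ε_i·y + k_i)^{a_i} with ε_i ∈ {±1}, both signs occurring, k_i > 0, a_i ≥ 1, k_- = min{k_i : ε_i = -1}, and let κ > 0. Then the equation h(y) = κ·y has at most three solutions in (0, k_-), counted with multiplicity. -/

import Mathlib

open Polynomial


noncomputable def Phi8 (p : ℝ[X]) : ℝ[X] :=
  p * derivative (derivative p) - derivative p * derivative p

lemma Phi8_mul (p q : ℝ[X]) : Phi8 (p * q) = p ^ 2 * Phi8 q + q ^ 2 * Phi8 p := by
  simp only [Phi8, derivative_mul, derivative_add]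
  ring

lemma Phi8_prod {ι : Type*} [DecidableEq ι] (s : Finset ι) (g : ι → ℝ[X]) :
    Phi8 (∏ i ∈ s, g i) = ∑ i ∈ s, (∏ j ∈ s.erase i, g j) ^ 2 * Phi8 (g i) := by
  induction s using Finset.induction_on with
  | empty => simp [Phi8]
  | @insert c s hc ih =>
    rw [Finset.prod_insert hc, Phi8_mul, ih, Finset.sum_insert hc, Finset.erase_insert hc]
    have key : ∀ i ∈ s, (∏ j ∈ (insert c s).erase i, g j) ^ 2 * Phi8 (g i)
        = (g c) ^ 2 * ((∏ j ∈ s.erase i, g j) ^ 2 * Phi8 (g i)) := by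
      intro i hi
      have hic : i ≠ c := fun h => hc (h ▸ hi)
      rw [Finset.erase_insert_of_ne hic.symm,
        Finset.prod_insert (fun h => hc (Finset.mem_of_mem_erase h))]
      ring
    rw [Finset.sum_congr rfl key, ← Finset.mul_sum]
    ring



lemma Phi8_linpow (e c : ℝ) (he : e * e = 1) (m : ℕ) (hm : 1 ≤ m) :
    Phi8 ((C e * X + C c) ^ m) = C (-(m : ℝ)) * (C e * X + C c) ^ (2 * m - 2) := by
  set l : ℝ[X] := C e * X + C c with hl
  have hee : (C e : ℝ[X]) * C e = 1 := by rw [← C_mul, he, C_1]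
  have hd : derivative l = C e := by simp [hl]
  have h1 : derivative (l ^ m) = C (m : ℝ) * l ^ (m - 1) * C e := by
    rw [derivative_pow, hd]
  rcases eq_or_lt_of_le hm with h | h
  · have hm1 : m = 1 := h.symm
    subst hm1
    simp only [Phi8, pow_one, hd]
    rw [show derivative (C e : ℝ[X]) = 0 from derivative_C, hee]
    norm_num
  · have h2 : 2 ≤ m := h
    have h1' : derivative (l ^ (m - 1)) = C ((m - 1 : ℕ) : ℝ) * l ^ (m - 2) * C e := by
      rw [derivative_pow, hd, show m - 1 - 1 = m - 2 from rfl]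
    have h2' : derivative (derivative (l ^ m))
        = C (m : ℝ) * (C ((m - 1 : ℕ) : ℝ) * l ^ (m - 2) * C e) * C e := by
      rw [h1, derivative_mul, derivative_mul, derivative_C, derivative_C, h1']
      ring
    have hpow1 : l ^ m * l ^ (m - 2) = l ^ (2 * m - 2) := by
      rw [← pow_add]; congr 1; omega
    have hpow2 : l ^ (m - 1) * l ^ (m - 1) = l ^ (2 * m - 2) := by
      rw [← pow_add]; congr 1; omega
    have hC : C (m : ℝ) * C ((m - 1 : ℕ) : ℝ) - C (m : ℝ) * C (m : ℝ) = C (-(m : ℝ)) := by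
      rw [← C_mul, ← C_mul, ← C_sub]
      congr 1
      rw [Nat.cast_sub hm, Nat.cast_one]
      ring
    calc Phi8 (l ^ m) = (l ^ m * l ^ (m - 2)) * (C (m : ℝ) * C ((m - 1 : ℕ) : ℝ)) * (C e * C e)
          - (l ^ (m - 1) * l ^ (m - 1)) * (C (m : ℝ) * C (m : ℝ)) * (C e * C e) := by
            rw [Phi8, h2', h1]; ring
      _ = l ^ (2 * m - 2) * (C (m : ℝ) * C ((m - 1 : ℕ) : ℝ) - C (m : ℝ) * C (m : ℝ)) := by
            rw [hpow1, hpow2, hee]; ring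
      _ = C (-(m : ℝ)) * l ^ (2 * m - 2) := by rw [hC]; ring

lemma sum_count_le8 (m : Multiset ℝ) (s : Finset ℝ) :
    ∑ x ∈ s, m.count x ≤ Multiset.card m := by
  classical
  calc ∑ x ∈ s, m.count x = ∑ x ∈ s ∩ m.toFinset, m.count x := by
        refine (Finset.sum_subset Finset.inter_subset_left ?_).symm
        intro x hx hx'
        have : x ∉ m.toFinset := fun hxm => hx' (Finset.mem_inter.2 ⟨hx, hxm⟩)
        rw [Multiset.count_eq_zero]
        exact fun hxm => this (Multiset.mem_toFinset.2 hxm)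
    _ ≤ ∑ x ∈ m.toFinset, m.count x :=
        Finset.sum_le_sum_of_subset Finset.inter_subset_right
    _ = Multiset.card m := Multiset.toFinset_sum_count_eq m

lemma mult_sub_one_le8 (p q W : ℝ[X]) (hWdef : W = q * p.derivative - p * q.derivative)
    (hW : W ≠ 0) (x : ℝ) :
    rootMultiplicity x p - 1 ≤ rootMultiplicity x W := by
  by_cases hroot : p.IsRoot x
  · have hd : (X - C x) ^ (rootMultiplicity x p - 1) ∣ derivative p := by
      have := derivative_rootMultiplicity_of_root hroot
      rw [← this]
      exact pow_rootMultiplicity_dvd _ _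
    have hdp : (X - C x) ^ (rootMultiplicity x p - 1) ∣ p :=
      (pow_dvd_pow _ (Nat.sub_le _ _)).trans (pow_rootMultiplicity_dvd _ _)
    rw [le_rootMultiplicity_iff hW, hWdef]
    exact dvd_sub (hd.mul_left q) (hdp.mul_right _)
  · rw [rootMultiplicity_eq_zero hroot]
    simp


lemma rolleA8 (p q W : ℝ[X]) (a b : ℝ) (hq : ∀ x, a < x → x < b → q.eval x ≠ 0)
    (hWdef : W = q * p.derivative - p * q.derivative) (hp : p ≠ 0) (hW : W ≠ 0) :
    (p.roots.filter (fun y => a < y ∧ y < b)).toFinset.card ≤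
      ((W.roots.filter (fun y => a < y ∧ y < b)).toFinset \
        (p.roots.filter (fun y => a < y ∧ y < b)).toFinset).card + 1 := by
  classical
  refine Finset.card_le_diff_of_interleaved fun x hx y hy hxy _ => ?_
  rw [Multiset.mem_toFinset, Multiset.mem_filter, mem_roots hp] at hx hy
  have hsub : Set.Icc x y ⊆ Set.Ioo a b := fun t ht =>
    ⟨lt_of_lt_of_le hx.2.1 ht.1, lt_of_le_of_lt ht.2 hy.2.2⟩
  have hcont : ContinuousOn (fun t => p.eval t / q.eval t) (Set.Icc x y) := by
    refine ContinuousOn.div p.continuous_aeval.continuousOn q.continuous_aeval.continuousOn ?_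
    exact fun t ht => hq t (hsub ht).1 (hsub ht).2
  have hderiv : ∀ t ∈ Set.Ioo x y, HasDerivAt (fun t => p.eval t / q.eval t)
      ((p.derivative.eval t * q.eval t - p.eval t * q.derivative.eval t) / q.eval t ^ 2) t := by
    intro t ht
    have ht' : a < t ∧ t < b := ⟨lt_trans hx.2.1 ht.1, lt_trans ht.2 hy.2.2⟩
    exact (p.hasDerivAt t).div (q.hasDerivAt t) (hq t ht'.1 ht'.2)
  have h0 : (fun t => p.eval t / q.eval t) x = (fun t => p.eval t / q.eval t) y := by
    have hx0 : p.eval x = 0 := hx.1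
    have hy0 : p.eval y = 0 := hy.1
    simp [hx0, hy0]
  obtain ⟨z, hz, hz0⟩ := exists_hasDerivAt_eq_zero hxy hcont h0 hderiv
  have hza : a < z := lt_trans hx.2.1 hz.1
  have hzb : z < b := lt_trans hz.2 hy.2.2
  have hqz : q.eval z ≠ 0 := hq z hza hzb
  have hnum : p.derivative.eval z * q.eval z - p.eval z * q.derivative.eval z = 0 :=
    (div_eq_zero_iff.mp hz0).resolve_right (pow_ne_zero 2 hqz)
  have hWz : W.eval z = 0 := by
    rw [hWdef]
    simp only [eval_sub, eval_mul]
    linarith [hnum]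
  refine ⟨z, ?_, hz⟩
  rw [Multiset.mem_toFinset, Multiset.mem_filter, mem_roots hW]
  exact ⟨hWz, hza, hzb⟩


lemma rolleB8 (p q W : ℝ[X]) (a b : ℝ) (hq : ∀ x, a < x → x < b → q.eval x ≠ 0)
    (hWdef : W = q * p.derivative - p * q.derivative) (hW : W ≠ 0)
    (hmult : ∀ x : ℝ, rootMultiplicity x p - 1 ≤ rootMultiplicity x W) :
    Multiset.card (p.roots.filter (fun y => a < y ∧ y < b)) ≤
      Multiset.card (W.roots.filter (fun y => a < y ∧ y < b)) + 1 := by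
  classical
  rcases eq_or_ne p 0 with rfl | hp
  · simp
  have hcount : ∀ x ∈ (p.roots.filter (fun y => a < y ∧ y < b)).toFinset,
      (p.roots.filter (fun y => a < y ∧ y < b)).count x = rootMultiplicity x p := by
    intro x hx
    have hPx := (Multiset.mem_filter.mp (Multiset.mem_toFinset.mp hx)).2
    rw [Multiset.count_filter, if_pos hPx, count_roots]
  have hcountW : ∀ x : ℝ, (a < x ∧ x < b) →
      (W.roots.filter (fun y => a < y ∧ y < b)).count x = rootMultiplicity x W := by
    intro x hx
    rw [Multiset.count_filter, if_pos hx, count_roots]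
  set m := p.roots.filter (fun y => a < y ∧ y < b) with hm
  set mW := W.roots.filter (fun y => a < y ∧ y < b) with hmW
  calc Multiset.card m = ∑ x ∈ m.toFinset, m.count x := (Multiset.toFinset_sum_count_eq _).symm
    _ = ∑ x ∈ m.toFinset, ((rootMultiplicity x p - 1) + 1) := by
        refine Finset.sum_congr rfl fun x hx => ?_
        rw [hcount x hx]
        have h1 : 1 ≤ rootMultiplicity x p := by
          rw [← count_roots]
          exact Multiset.one_le_count_iff_mem.mpr
            (Multiset.mem_of_mem_filter (Multiset.mem_toFinset.mp hx))
        omega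
    _ = (∑ x ∈ m.toFinset, (rootMultiplicity x p - 1)) + m.toFinset.card := by
        rw [Finset.sum_add_distrib, Finset.card_eq_sum_ones]
    _ ≤ (∑ x ∈ m.toFinset, rootMultiplicity x W) + ((mW.toFinset \ m.toFinset).card + 1) := by
        refine add_le_add (Finset.sum_le_sum fun x _ => hmult x) ?_
        exact rolleA8 p q W a b hq hWdef hp hW
    _ ≤ (∑ x ∈ m.toFinset, mW.count x) + ((∑ x ∈ mW.toFinset \ m.toFinset, mW.count x) + 1) := by
        refine add_le_add ?_ (Nat.add_le_add_right ?_ 1)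
        · refine Finset.sum_le_sum fun x hx => ?_
          have hPx := (Multiset.mem_filter.mp (Multiset.mem_toFinset.mp hx)).2
          rw [hcountW x hPx]
        · rw [Finset.card_eq_sum_ones]
          refine Finset.sum_le_sum fun x hx => ?_
          exact Multiset.one_le_count_iff_mem.mpr
            (Multiset.mem_toFinset.mp (Finset.mem_sdiff.mp hx).1)
    _ = (∑ x ∈ m.toFinset ∪ (mW.toFinset \ m.toFinset), mW.count x) + 1 := by
        rw [Finset.sum_union Finset.disjoint_sdiff, add_assoc]
    _ ≤ Multiset.card mW + 1 := Nat.add_le_add_right (sum_count_le8 _ _) 1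


lemma keyid8 (n : ℕ) (ε : Fin n → ℝ) (hεsq : ∀ i, ε i * ε i = 1) (k : Fin n → ℝ)
    (a : Fin n → ℕ) (ha : ∀ i, 1 ≤ a i) (l : Fin n → ℝ[X])
    (hld : ∀ i, l i = C (ε i) * X + C (k i)) :
    X ^ 2 * Phi8 (∏ i, l i ^ a i) + (∏ i, l i ^ a i) ^ 2
    = (∏ i, l i ^ (2 * a i - 2)) *
      ((∏ i, l i ^ 2) - X ^ 2 *
        ∑ i, C ((a i : ℝ)) * ∏ j ∈ Finset.univ.erase i, l j ^ 2) := by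
  classical
  have hPhih : Phi8 (∏ i, l i ^ a i)
      = ∑ i, (∏ j ∈ Finset.univ.erase i, l j ^ a j) ^ 2 * Phi8 (l i ^ a i) :=
    Phi8_prod Finset.univ (fun i => l i ^ a i)
  have hPhi_i : ∀ i, Phi8 (l i ^ a i) = C (-(a i : ℝ)) * l i ^ (2 * a i - 2) := by
    intro i
    rw [hld i]
    exact Phi8_linpow _ _ (hεsq i) _ (ha i)
  have hED : (∏ i, l i ^ (2 * a i - 2)) * (∏ i, l i ^ 2) = (∏ i, l i ^ a i) ^ 2 := by
    rw [← Finset.prod_mul_distrib, ← Finset.prod_pow]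
    refine Finset.prod_congr rfl fun i _ => ?_
    rw [← pow_add, ← pow_mul]
    congr 1
    have := ha i
    omega
  have hsq : ∀ i : Fin n, (∏ j ∈ Finset.univ.erase i, l j ^ a j) ^ 2
      = ∏ j ∈ Finset.univ.erase i, l j ^ (2 * a j) := by
    intro i
    rw [← Finset.prod_pow]
    refine Finset.prod_congr rfl fun j _ => ?_
    rw [← pow_mul]
    congr 1
    omega
  have hEM : ∀ i : Fin n, (∏ i, l i ^ (2 * a i - 2)) * (∏ j ∈ Finset.univ.erase i, l j ^ 2)
      = l i ^ (2 * a i - 2) * ∏ j ∈ Finset.univ.erase i, l j ^ (2 * a j) := by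
    intro i
    rw [← Finset.mul_prod_erase Finset.univ (fun j => l j ^ (2 * a j - 2)) (Finset.mem_univ i),
      mul_assoc, ← Finset.prod_mul_distrib]
    congr 1
    refine Finset.prod_congr rfl fun j _ => ?_
    rw [← pow_add]
    congr 1
    have := ha j
    omega
  have main2 : (∏ i, l i ^ (2 * a i - 2)) *
      (X ^ 2 * ∑ i, C ((a i : ℝ)) * ∏ j ∈ Finset.univ.erase i, l j ^ 2)
      = ∑ i, X ^ 2 * (C ((a i : ℝ)) *
          (l i ^ (2 * a i - 2) * ∏ j ∈ Finset.univ.erase i, l j ^ (2 * a j))) := by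
    rw [Finset.mul_sum, Finset.mul_sum]
    refine Finset.sum_congr rfl fun i _ => ?_
    rw [show (∏ i, l i ^ (2 * a i - 2)) * (X ^ 2 * (C ((a i : ℝ)) *
        ∏ j ∈ Finset.univ.erase i, l j ^ 2))
      = X ^ 2 * (C ((a i : ℝ)) * ((∏ i, l i ^ (2 * a i - 2)) *
        (∏ j ∈ Finset.univ.erase i, l j ^ 2))) from by ring, hEM i]
  have main1 : X ^ 2 * Phi8 (∏ i, l i ^ a i)
      = ∑ i, -(X ^ 2 * (C ((a i : ℝ)) *
          (l i ^ (2 * a i - 2) * ∏ j ∈ Finset.univ.erase i, l j ^ (2 * a j)))) := by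
    rw [hPhih, Finset.mul_sum]
    refine Finset.sum_congr rfl fun i _ => ?_
    rw [hPhi_i i, hsq i, map_neg]
    ring
  rw [mul_sub, hED, main2, main1, Finset.sum_neg_distrib]
  ring


lemma gbound8 (n : ℕ) (ε : Fin n → ℝ) (k : Fin n → ℝ)
    (hk : ∀ i, 0 < k i) (a : Fin n → ℕ) (ha : ∀ i, 1 ≤ a i) (km : ℝ) (hkm0 : 0 < km)
    (hnel : Nonempty (Fin n))
    (hlpos : ∀ (i) (x : ℝ), 0 < x → x < km → 0 < ε i * x + k i)
    (G : ℝ[X])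
    (hGdef : G = (∏ i, (C (ε i) * X + C (k i)) ^ 2) - X ^ 2 *
      ∑ i, C ((a i : ℝ)) * ∏ j ∈ Finset.univ.erase i, (C (ε j) * X + C (k j)) ^ 2)
    (hGne : G ≠ 0) :
    Multiset.card (G.roots.filter (fun y => 0 < y ∧ y < km)) ≤ 1 := by
  classical
  set S : ℝ → ℝ := fun x => ∑ i, (a i : ℝ) * (x / (ε i * x + k i)) ^ 2 with hS
  -- evaluation identity
  have hGeval : ∀ x : ℝ, 0 < x → x < km →
      G.eval x = (∏ i, (ε i * x + k i) ^ 2) * (1 - S x) := by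
    intro x hx0 hxk
    have hle : ∀ i, 0 < ε i * x + k i := fun i => hlpos i x hx0 hxk
    rw [hGdef]
    simp only [eval_sub, eval_mul, eval_pow, eval_X, eval_finset_sum, eval_C, eval_prod,
      eval_add]
    rw [mul_sub, mul_one]
    congr 1
    rw [hS, Finset.mul_sum, Finset.mul_sum]
    refine Finset.sum_congr rfl fun i _ => ?_
    rw [← Finset.mul_prod_erase Finset.univ (fun j => (ε j * x + k j) ^ 2) (Finset.mem_univ i)]
    have hne := ne_of_gt (hle i)
    field_simp
    have hne' : x * ε i + k i ≠ 0 := by rwa [mul_comm]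
    ring_nf
    field_simp
    ring
  have hDpos : ∀ x : ℝ, 0 < x → x < km → 0 < ∏ i, (ε i * x + k i) ^ 2 := by
    intro x hx0 hxk
    exact Finset.prod_pos fun i _ => pow_pos (hlpos i x hx0 hxk) _
  -- S is strictly monotone on the interval
  have hSmono : ∀ x y : ℝ, 0 < x → x < y → y < km → S x < S y := by
    intro x y hx0 hxy hyk
    refine Finset.sum_lt_sum_of_nonempty Finset.univ_nonempty ?_
    intro i _
    have hlx : 0 < ε i * x + k i := hlpos i x hx0 (hxy.trans hyk)
    have hly : 0 < ε i * y + k i := hlpos i y (hx0.trans hxy) hyk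
    have hfrac : x / (ε i * x + k i) < y / (ε i * y + k i) := by
      rw [div_lt_div_iff₀ hlx hly]
      nlinarith [hk i]
    have hge : 0 ≤ x / (ε i * x + k i) := le_of_lt (div_pos hx0 hlx)
    have hsq : (x / (ε i * x + k i)) ^ 2 < (y / (ε i * y + k i)) ^ 2 :=
      pow_lt_pow_left₀ hfrac hge (by norm_num)
    have hai : (0 : ℝ) < (a i : ℝ) := by exact_mod_cast ha i
    exact mul_lt_mul_of_pos_left hsq hai
  -- roots of G in the interval have S = 1
  have hSone : ∀ x : ℝ, 0 < x → x < km → G.IsRoot x → S x = 1 := by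
    intro x hx0 hxk hroot
    have h0 : (∏ i, (ε i * x + k i) ^ 2) * (1 - S x) = 0 := by
      rw [← hGeval x hx0 hxk]; exact hroot
    have := mul_eq_zero.mp h0
    rcases this with h' | h'
    · exact absurd h' (ne_of_gt (hDpos x hx0 hxk))
    · linarith [h']
  -- derivative of G is negative at roots in the interval
  have hGd : ∀ x : ℝ, 0 < x → x < km → G.IsRoot x → (derivative G).eval x < 0 := by
    intro x hx0 hxk hroot
    have hterm : ∀ i : Fin n, HasDerivAt (fun t => (a i : ℝ) * (t / (ε i * t + k i)) ^ 2)
        ((a i : ℝ) * ((2 : ℕ) * (x / (ε i * x + k i)) ^ 1 *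
          ((1 * (ε i * x + k i) - x * ε i) / (ε i * x + k i) ^ 2))) x := by
      intro i
      have hlx : (ε i * x + k i) ≠ 0 := ne_of_gt (hlpos i x hx0 hxk)
      have h1 : HasDerivAt (fun t => ε i * t + k i) (ε i) x := by
        simpa using ((hasDerivAt_id x).const_mul (ε i)).add_const (k i)
      have h2 : HasDerivAt (fun t => t / (ε i * t + k i))
          ((1 * (ε i * x + k i) - x * ε i) / (ε i * x + k i) ^ 2) x :=
        (hasDerivAt_id x).div h1 hlx
      exact (h2.pow 2).const_mul _
    have hSd : HasDerivAt S (∑ i, (a i : ℝ) * ((2 : ℕ) * (x / (ε i * x + k i)) ^ 1 *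
        ((1 * (ε i * x + k i) - x * ε i) / (ε i * x + k i) ^ 2))) x :=
      HasDerivAt.fun_sum fun i _ => hterm i
    have hSdpos : 0 < ∑ i, (a i : ℝ) * ((2 : ℕ) * (x / (ε i * x + k i)) ^ 1 *
        ((1 * (ε i * x + k i) - x * ε i) / (ε i * x + k i) ^ 2)) := by
      refine Finset.sum_pos (fun i _ => ?_) Finset.univ_nonempty
      have hlx : 0 < ε i * x + k i := hlpos i x hx0 hxk
      have hnum : 1 * (ε i * x + k i) - x * ε i = k i := by ring
      rw [hnum, pow_one]
      have hai : (0 : ℝ) < (a i : ℝ) := by exact_mod_cast ha i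
      have hxq : (0:ℝ) < x / (ε i * x + k i) := div_pos hx0 hlx
      have h2' : (0:ℝ) < ((2:ℕ):ℝ) := by norm_num
      exact mul_pos hai (mul_pos (mul_pos h2' hxq) (div_pos (hk i) (pow_pos hlx 2)))
    set DD : ℝ[X] := ∏ i, (C (ε i) * X + C (k i)) ^ 2 with hDD
    have hDDeval : ∀ t : ℝ, DD.eval t = ∏ i, (ε i * t + k i) ^ 2 := by
      intro t
      rw [hDD, eval_prod]
      exact Finset.prod_congr rfl fun i _ => by simp
    have hprod : HasDerivAt (fun t => DD.eval t * (1 - S t))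
        ((derivative DD).eval x * (1 - S x) + DD.eval x * (0 - _)) x :=
      (DD.hasDerivAt x).mul ((hasDerivAt_const x (1:ℝ)).sub hSd)
    have hev : (fun t => G.eval t) =ᶠ[nhds x] fun t => DD.eval t * (1 - S t) := by
      filter_upwards [Ioo_mem_nhds hx0 hxk] with t ht
      rw [hGeval t ht.1 ht.2, hDDeval t]
    have hG' : HasDerivAt (fun t => G.eval t)
        ((derivative DD).eval x * (1 - S x) + DD.eval x * (0 - _)) x :=
      hprod.congr_of_eventuallyEq hev
    have huniq := (G.hasDerivAt x).unique hG'
    rw [huniq, hSone x hx0 hxk hroot]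
    have hDDx : 0 < DD.eval x := by rw [hDDeval]; exact hDpos x hx0 hxk
    simp only [sub_self, mul_zero, zero_add, zero_sub, mul_neg]
    exact neg_lt_zero.mpr (mul_pos hDDx hSdpos)
  -- conclude
  set mG := G.roots.filter (fun y => 0 < y ∧ y < km) with hmG
  by_contra hcon
  push_neg at hcon
  have h2 : 2 ≤ Multiset.card mG := hcon
  obtain ⟨u, hu⟩ := Multiset.card_pos_iff_exists_mem.mp (lt_of_lt_of_le (by norm_num) h2)
  have hcard' : 1 ≤ Multiset.card (mG.erase u) := by
    rw [Multiset.card_erase_of_mem hu]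
    exact Nat.le_pred_of_lt (lt_of_lt_of_le (by norm_num) h2)
  obtain ⟨v, hv⟩ := Multiset.card_pos_iff_exists_mem.mp (lt_of_lt_of_le zero_lt_one hcard')
  have hv' : v ∈ mG := Multiset.mem_of_mem_erase hv
  have hufacts := Multiset.mem_filter.mp hu
  have hvfacts := Multiset.mem_filter.mp hv'
  have huroot : G.IsRoot u := isRoot_of_mem_roots hufacts.1
  have hvroot : G.IsRoot v := isRoot_of_mem_roots hvfacts.1
  have huI := hufacts.2
  have hvI := hvfacts.2
  rcases eq_or_ne u v with rfl | hne
  · -- double root: contradiction with derivative nonzero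
    have hcnt : 2 ≤ mG.count u := by
      have h1' : 1 ≤ (mG.erase u).count u := Multiset.one_le_count_iff_mem.mpr hv
      have := Multiset.count_erase_self u mG
      omega
    have hmult : 2 ≤ rootMultiplicity u G := by
      have : mG.count u ≤ G.roots.count u := Multiset.count_le_of_le u (Multiset.filter_le _ _)
      rw [count_roots] at this
      omega
    have := (one_lt_rootMultiplicity_iff_isRoot hGne).mp hmult
    have hd0 : (derivative G).eval u = 0 := this.2
    have := hGd u huI.1 huI.2 huroot
    rw [hd0] at this
    exact lt_irrefl 0 this
  · -- two distinct roots: contradiction with strict monotonicity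
    have h1 : S u = 1 := hSone u huI.1 huI.2 huroot
    have h2' : S v = 1 := hSone v hvI.1 hvI.2 hvroot
    rcases lt_or_gt_of_ne hne with hlt | hlt
    · have := hSmono u v huI.1 hlt hvI.2
      rw [h1, h2'] at this; exact lt_irrefl 1 this
    · have := hSmono v u hvI.1 hlt huI.2
      rw [h1, h2'] at this; exact lt_irrefl 1 this

theorem stmt8 (n : ℕ) (ε : Fin n → ℝ) (hε : ∀ i, ε i = 1 ∨ ε i = -1)
    (k : Fin n → ℝ) (hk : ∀ i, 0 < k i) (a : Fin n → ℕ) (ha : ∀ i, 1 ≤ a i)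
    (hplus : ∃ i, ε i = 1) (hminus : ∃ i, ε i = -1)
    (km : ℝ) (hkm : IsLeast {r | ∃ i, ε i = -1 ∧ k i = r} km)
    (κ : ℝ) (hκ : 0 < κ)
    (h : ℝ[X]) (hh : h = ∏ i, (C (ε i) * X + C (k i)) ^ a i) :
    ((h - C κ * X).roots.filter (fun y => 0 < y ∧ y < km)).card ≤ 3 := by
  classical
  obtain ⟨⟨i₀, hi₀ε, hi₀k⟩, hlb⟩ := hkm
  have hkm0 : 0 < km := hi₀k ▸ hk i₀
  have hnel : Nonempty (Fin n) := ⟨i₀⟩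
  set l : Fin n → ℝ[X] := fun i => C (ε i) * X + C (k i) with hldef
  have hεsq : ∀ i, ε i * ε i = 1 := fun i => by rcases hε i with h' | h' <;> rw [h'] <;> norm_num
  have hevall : ∀ i x, (l i).eval x = ε i * x + k i := fun i x => by simp [hldef]
  have hlpos : ∀ (i) (x : ℝ), 0 < x → x < km → 0 < (l i).eval x := by
    intro i x hx0 hxk
    rw [hevall]
    rcases hε i with h' | h'
    · rw [h']; nlinarith [hk i]
    · have hki : km ≤ k i := hlb ⟨i, h', rfl⟩
      rw [h']; nlinarith
  have hlne : ∀ i, l i ≠ 0 := by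
    intro i H
    have := hevall i 0
    rw [H] at this
    simp at this
    nlinarith [hk i, this]
  have hhpos : ∀ x : ℝ, 0 < x → x < km → 0 < h.eval x := by
    intro x hx0 hxk
    rw [hh, eval_prod]
    exact Finset.prod_pos fun i _ => by rw [eval_pow]; exact pow_pos (hlpos i x hx0 hxk) _
  -- the polynomials
  set W₀ : ℝ[X] := X * derivative h - h with hW₀def
  set D : ℝ[X] := ∏ i, (l i) ^ 2 with hDdef
  set M : ℝ[X] := ∑ i, C ((a i : ℝ)) * ∏ j ∈ Finset.univ.erase i, (l j) ^ 2 with hMdef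
  set E : ℝ[X] := ∏ i, (l i) ^ (2 * a i - 2) with hEdef
  set G : ℝ[X] := D - X ^ 2 * M with hGdef
  -- nonvanishing
  have hW₀0 : W₀.eval 0 = -h.eval 0 := by rw [hW₀def]; simp
  have hh0 : 0 < h.eval 0 := by
    rw [hh, eval_prod]
    refine Finset.prod_pos fun i _ => ?_
    rw [eval_pow]
    refine pow_pos ?_ _
    have := hevall i 0
    rw [this]
    simpa using hk i
  have hW₀ne : W₀ ≠ 0 := by
    intro H
    rw [H] at hW₀0
    simp at hW₀0
    nlinarith
  have hEne : E ≠ 0 := by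
    rw [hEdef]
    exact Finset.prod_ne_zero_iff.mpr fun i _ => pow_ne_zero _ (hlne i)
  have hG0 : G.eval 0 = D.eval 0 := by rw [hGdef]; simp
  have hD0 : 0 < D.eval 0 := by
    rw [hDdef, eval_prod]
    refine Finset.prod_pos fun i _ => ?_
    rw [eval_pow]
    refine pow_pos ?_ _
    rw [hevall]
    simpa using hk i
  have hGne : G ≠ 0 := by
    intro H
    rw [H] at hG0
    simp at hG0
    nlinarith
  -- the key algebraic identity
  have keyid : X ^ 2 * Phi8 h + h ^ 2 = E * G := by
    rw [hh, hEdef, hGdef, hDdef, hMdef]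
    exact keyid8 n ε hεsq k a ha l (fun i => by rw [hldef])
  -- Step 1
  have hWid1 : W₀ = X * (h - C κ * X).derivative - (h - C κ * X) * derivative (X : ℝ[X]) := by
    rw [hW₀def]
    simp only [derivative_sub, derivative_mul, derivative_C, derivative_X]
    ring
  have step1 := rolleB8 (h - C κ * X) X W₀ 0 km
    (fun x hx0 _ => by simpa using ne_of_gt hx0) hWid1 hW₀ne
    (fun x => mult_sub_one_le8 _ _ _ hWid1 hW₀ne x)
  -- Step 2
  have hWid2 : E * G = (X * h) * W₀.derivative - W₀ * (X * h).derivative := by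
    have hdW0 : W₀.derivative = X * derivative (derivative h) := by
      rw [hW₀def]
      simp only [derivative_sub, derivative_mul, derivative_X]
      ring
    rw [hdW0, ← keyid, Phi8]
    simp only [derivative_mul, derivative_X]
    ring
  have hEGne : E * G ≠ 0 := mul_ne_zero hEne hGne
  have step2 := rolleB8 W₀ (X * h) (E * G) 0 km
    (fun x hx0 hxk => by
      simp only [eval_mul, eval_X]
      exact mul_ne_zero (ne_of_gt hx0) (ne_of_gt (hhpos x hx0 hxk)))
    hWid2 hEGne (fun x => mult_sub_one_le8 _ _ _ hWid2 hEGne x)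
  -- Step 3 : roots of E*G in the interval = roots of G in the interval
  have hEGsplit : Multiset.card ((E * G).roots.filter (fun y => 0 < y ∧ y < km))
      = Multiset.card (G.roots.filter (fun y => 0 < y ∧ y < km)) := by
    rw [roots_mul hEGne, Multiset.filter_add, Multiset.card_add]
    have hE0 : (E.roots.filter (fun y => 0 < y ∧ y < km)) = 0 := by
      rw [Multiset.filter_eq_nil]
      intro x hx hPx
      have hroot : E.eval x = 0 := by
        have := (mem_roots hEne).mp hx
        exact this
      have hpos : 0 < E.eval x := by
        rw [hEdef, eval_prod]
        exact Finset.prod_pos fun i _ => by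
          rw [eval_pow]; exact pow_pos (hlpos i x hPx.1 hPx.2) _
      rw [hroot] at hpos
      exact lt_irrefl 0 hpos
    rw [hE0]
    simp
  -- Step 4 : G has at most one root (with multiplicity) in the interval
  have hG1 : Multiset.card (G.roots.filter (fun y => 0 < y ∧ y < km)) ≤ 1 := by
    refine gbound8 n ε k hk a ha km hkm0 hnel ?_ G ?_ hGne
    · intro i x hx0 hxk
      have := hlpos i x hx0 hxk
      rwa [hevall i x] at this
    · simp only [hGdef, hDdef, hMdef, hldef]
  -- assemble
  have := step1.trans (Nat.add_le_add_right step2 1)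
  rw [hEGsplit] at this
  omega
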